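/- Let (Ω, P) be a probability space and X : Ω → [0,1] a random variable with E[X] ≥ β for some real β ∈ (0, 1]. Let t = ⌈log₂(4/β)⌉, and for each i ∈ {1, …, t} let p_i = P[X ≥ 2^{−i}] and k_i = (4 ln 6)/(2^i · β). Then ∏_{i=1}^{t} (1 − p_i)^{k_i} ≤ 1/6, where exponentiation is real-valued exponentiation. -/

import Mathlib

open MeasureTheory

/-- The work investment strategy lemma of Berman, Raskhodnikova and Yaroslavtsev:
if `X : Ω → [0,1]` has expectation at least `β`, `t = ⌈log₂(4/β)⌉`,
`p i = P[X ≥ 2^{-i}]` and `k i = 4 ln 6 / (2^i β)`, then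
`∏_{i=1}^t (1 - p i)^(k i) ≤ 1/6`. -/
theorem stmt4 {Ω : Type*} [MeasurableSpace Ω] (P : Measure Ω) [IsProbabilityMeasure P]
    (X : Ω → ℝ) (hX : Measurable X) (hX01 : ∀ ω, X ω ∈ Set.Icc (0 : ℝ) 1)
    (β : ℝ) (hβ : β ∈ Set.Ioc (0 : ℝ) 1)
    (hEX : β ≤ ∫ ω, X ω ∂P) :
    ∏ i ∈ Finset.Icc 1 ⌈Real.logb 2 (4 / β)⌉₊,
        (1 - (P {ω | (2 : ℝ) ^ (-(i : ℤ)) ≤ X ω}).toReal) ^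
          (4 * Real.log 6 / (2 ^ i * β)) ≤ 1 / 6 := by
  classical
  obtain ⟨hβ0, hβ1⟩ := hβ
  set t := ⌈Real.logb 2 (4 / β)⌉₊ with ht
  set A : ℕ → Set Ω := fun i => {ω | (2 : ℝ) ^ (-(i : ℤ)) ≤ X ω} with hA
  set p : ℕ → ℝ := fun i => (P (A i)).toReal with hp
  set L := Real.log 6 with hL
  have hL0 : 0 ≤ L := Real.log_nonneg (by norm_num)
  have hp0 : ∀ i, 0 ≤ p i := fun i => ENNReal.toReal_nonneg
  have hp1 : ∀ i, p i ≤ 1 := by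
    intro i
    have h := prob_le_one (μ := P) (s := A i)
    simpa using ENNReal.toReal_mono (by norm_num) h
  have ht1 : 1 ≤ t := by
    rw [ht]
    have h1 : (1:ℝ) < 4 / β := by
      rw [lt_div_iff₀ hβ0]; linarith
    exact Nat.one_le_ceil_iff.mpr (Real.logb_pos (by norm_num) h1)
  -- 2^{-t} ≤ β/4
  have h4β : (0:ℝ) < 4 / β := by positivity
  have htβ : (2:ℝ) ^ (-(t:ℤ)) ≤ β / 4 := by
    have hlog : Real.logb 2 (4/β) ≤ (t:ℝ) := Nat.le_ceil _
    have h2t : 4/β ≤ (2:ℝ) ^ (t:ℕ) := by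
      calc 4/β = (2:ℝ) ^ Real.logb 2 (4/β) :=
            (Real.rpow_logb two_pos (by norm_num) h4β).symm
        _ ≤ (2:ℝ) ^ (t:ℝ) := Real.rpow_le_rpow_of_exponent_le (by norm_num) hlog
        _ = (2:ℝ) ^ (t:ℕ) := Real.rpow_natCast 2 t
    have h2tpos : (0:ℝ) < (2:ℝ) ^ (t:ℕ) := by positivity
    have : ((2:ℝ) ^ (t:ℕ))⁻¹ ≤ (4/β)⁻¹ := inv_anti₀ h4β h2t
    rw [inv_div] at this
    calc (2:ℝ) ^ (-(t:ℤ)) = ((2:ℝ) ^ (t:ℕ))⁻¹ := by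
          rw [zpow_neg, zpow_natCast]
      _ ≤ β / 4 := this
  -- pointwise bound
  have hpt : ∀ ω, X ω ≤ (2:ℝ) ^ (-(t:ℤ)) +
      ∑ i ∈ Finset.Icc 1 t, (2:ℝ) ^ (-(i:ℤ)+1) * (A i).indicator (fun _ => (1:ℝ)) ω := by
    intro ω
    obtain ⟨hx0, hx1⟩ := hX01 ω
    have hterm0 : ∀ i ∈ Finset.Icc 1 t,
        0 ≤ (2:ℝ) ^ (-(i:ℤ)+1) * (A i).indicator (fun _ => (1:ℝ)) ω := by
      intro i _
      apply mul_nonneg (by positivity)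
      exact Set.indicator_nonneg (fun _ _ => zero_le_one) ω
    by_cases hcase : (2:ℝ) ^ (-(t:ℤ)) ≤ X ω
    · have hex : ∃ j : ℕ, (2:ℝ) ^ (-(j:ℤ)) ≤ X ω := ⟨t, hcase⟩
      set j := Nat.find hex with hj
      have hjspec : (2:ℝ) ^ (-(j:ℤ)) ≤ X ω := Nat.find_spec hex
      have hjt : j ≤ t := Nat.find_le hcase
      set i := max j 1 with hi
      have hi1 : 1 ≤ i := le_max_right _ _
      have hit : i ≤ t := max_le hjt ht1
      have hmem : i ∈ Finset.Icc 1 t := Finset.mem_Icc.mpr ⟨hi1, hit⟩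
      have h2i : (2:ℝ) ^ (-(i:ℤ)) ≤ X ω := by
        refine le_trans ?_ hjspec
        apply zpow_le_zpow_right₀ (by norm_num : (1:ℝ) ≤ 2)
        omega
      have h3 : X ω ≤ (2:ℝ) ^ (-(i:ℤ)+1) := by
        rcases le_or_gt j 1 with hj1 | hj1
        · have : i = 1 := by omega
          rw [this]; norm_num; exact hx1
        · have : i = j := by omega
          rw [this]
          have hmin : ¬ (2:ℝ) ^ (-((j-1:ℕ):ℤ)) ≤ X ω := Nat.find_min hex (by omega)
          have hcast : (-((j-1:ℕ):ℤ)) = -(j:ℤ)+1 := by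
            have : (1:ℕ) ≤ j := by omega
            push_cast [Nat.cast_sub this]
            ring
          rw [hcast] at hmin
          linarith [not_le.mp hmin]
      have hind : (A i).indicator (fun _ => (1:ℝ)) ω = 1 := by
        apply Set.indicator_of_mem
        exact h2i
      have hsingle : (2:ℝ) ^ (-(i:ℤ)+1) * (A i).indicator (fun _ => (1:ℝ)) ω ≤
          ∑ i' ∈ Finset.Icc 1 t, (2:ℝ) ^ (-(i':ℤ)+1) * (A i').indicator (fun _ => (1:ℝ)) ω :=
        Finset.single_le_sum hterm0 hmem
      rw [hind, mul_one] at hsingle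
      have h2tpos : (0:ℝ) ≤ (2:ℝ) ^ (-(t:ℤ)) := by positivity
      linarith
    · push_neg at hcase
      have hsum0 : 0 ≤ ∑ i ∈ Finset.Icc 1 t,
          (2:ℝ) ^ (-(i:ℤ)+1) * (A i).indicator (fun _ => (1:ℝ)) ω :=
        Finset.sum_nonneg hterm0
      linarith
  -- integrability
  have hXint : Integrable X P := by
    apply Integrable.mono' (integrable_const (1:ℝ)) hX.aestronglyMeasurable
    filter_upwards with ω
    rw [Real.norm_eq_abs, abs_le]
    exact ⟨by linarith [(hX01 ω).1], (hX01 ω).2⟩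
  have hAm : ∀ i, MeasurableSet (A i) := fun i => measurableSet_le measurable_const hX
  have hGint : ∀ i : ℕ, Integrable (fun ω => (2:ℝ) ^ (-(i:ℤ)+1) * (A i).indicator (fun _ => (1:ℝ)) ω) P := by
    intro i
    exact ((integrable_const (1:ℝ)).indicator (hAm i)).const_mul _
  -- integral bound
  have hInt : β ≤ (2:ℝ) ^ (-(t:ℤ)) + ∑ i ∈ Finset.Icc 1 t, (2:ℝ) ^ (-(i:ℤ)+1) * p i := by
    have hmono : ∫ ω, X ω ∂P ≤ ∫ ω, ((2:ℝ) ^ (-(t:ℤ)) +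
        ∑ i ∈ Finset.Icc 1 t, (2:ℝ) ^ (-(i:ℤ)+1) * (A i).indicator (fun _ => (1:ℝ)) ω) ∂P := by
      apply integral_mono hXint
      · exact (integrable_const _).add (integrable_finset_sum _ (fun i _ => hGint i))
      · exact hpt
    have hcalc : ∫ ω, ((2:ℝ) ^ (-(t:ℤ)) +
        ∑ i ∈ Finset.Icc 1 t, (2:ℝ) ^ (-(i:ℤ)+1) * (A i).indicator (fun _ => (1:ℝ)) ω) ∂P
        = (2:ℝ) ^ (-(t:ℤ)) + ∑ i ∈ Finset.Icc 1 t, (2:ℝ) ^ (-(i:ℤ)+1) * p i := by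
      rw [integral_add (integrable_const _) (integrable_finset_sum _ (fun i _ => hGint i)),
        integral_const, integral_finset_sum _ (fun i _ => hGint i)]
      simp only [measureReal_def, measure_univ, ENNReal.toReal_one, one_smul]
      congr 1
      apply Finset.sum_congr rfl
      intro i _
      rw [integral_const_mul, integral_indicator_const _ (hAm i)]
      simp [hp, measureReal_def]
    linarith [hmono, hcalc ▸ hmono, le_trans hEX (hcalc ▸ hmono)]
  -- sum of p_i 2^{-i+1} ≥ 3β/4
  have hS : 3 * β / 4 ≤ ∑ i ∈ Finset.Icc 1 t, (2:ℝ) ^ (-(i:ℤ)+1) * p i := by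
    linarith
  -- lower bound on Σ k i * p i
  have hK : L ≤ ∑ i ∈ Finset.Icc 1 t, (4 * L / (2 ^ i * β)) * p i := by
    have hrw : ∀ i : ℕ, (4 * L / (2 ^ i * β)) * p i =
        (2 * L / β) * ((2:ℝ) ^ (-(i:ℤ)+1) * p i) := by
      intro i
      have h2i : ((2:ℝ) ^ i) ≠ 0 := by positivity
      have hz : (2:ℝ) ^ (-(i:ℤ)+1) = 2 / 2 ^ i := by
        rw [zpow_add₀ (by norm_num : (2:ℝ) ≠ 0), zpow_neg, zpow_natCast, zpow_one]
        ring
      rw [hz]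
      field_simp
      ring
    calc L ≤ (2 * L / β) * (3 * β / 4) := by
          rw [div_mul_eq_mul_div, mul_comm]
          rw [le_div_iff₀ hβ0]
          nlinarith
      _ ≤ (2 * L / β) * ∑ i ∈ Finset.Icc 1 t, (2:ℝ) ^ (-(i:ℤ)+1) * p i := by
          apply mul_le_mul_of_nonneg_left hS (by positivity)
      _ = ∑ i ∈ Finset.Icc 1 t, (4 * L / (2 ^ i * β)) * p i := by
          rw [Finset.mul_sum]
          exact Finset.sum_congr rfl (fun i _ => (hrw i).symm)
  -- product bound
  show ∏ i ∈ Finset.Icc 1 t, (1 - p i) ^ (4 * L / (2 ^ i * β)) ≤ 1 / 6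
  have hfac : ∀ i ∈ Finset.Icc 1 t, (1 - p i) ^ (4 * L / (2 ^ i * β)) ≤
      Real.exp (-((4 * L / (2 ^ i * β)) * p i)) := by
    intro i _
    have hk0 : 0 ≤ 4 * L / (2 ^ i * β) := by positivity
    calc (1 - p i) ^ (4 * L / (2 ^ i * β))
        ≤ (Real.exp (-(p i))) ^ (4 * L / (2 ^ i * β)) := by
          apply Real.rpow_le_rpow (by linarith [hp1 i]) _ hk0
          linarith [Real.add_one_le_exp (-(p i))]
      _ = Real.exp (-(p i) * (4 * L / (2 ^ i * β))) := (Real.exp_mul _ _).symm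
      _ = Real.exp (-((4 * L / (2 ^ i * β)) * p i)) := by ring_nf
  calc ∏ i ∈ Finset.Icc 1 t, (1 - p i) ^ (4 * L / (2 ^ i * β))
      ≤ ∏ i ∈ Finset.Icc 1 t, Real.exp (-((4 * L / (2 ^ i * β)) * p i)) := by
        apply Finset.prod_le_prod
        · intro i _
          exact Real.rpow_nonneg (by linarith [hp1 i]) _
        · exact hfac
    _ = Real.exp (∑ i ∈ Finset.Icc 1 t, -((4 * L / (2 ^ i * β)) * p i)) :=
        (Real.exp_sum _ _).symm
    _ ≤ Real.exp (-L) := by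
        apply Real.exp_le_exp.mpr
        rw [Finset.sum_neg_distrib]
        linarith
    _ = 1 / 6 := by
        rw [hL, Real.exp_neg, Real.exp_log (by norm_num)]
        norm_num
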